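/- Let K/k be a finite separable field extension and let V and V' be k-linear subspaces of K, each of codimension 1 (i.e., dim_k V = dim_k V' = [K:k] − 1). Then there exists a nonzero element λ ∈ K with λV = V', and λ is unique up to multiplication by a nonzero element of k: if μ ∈ K is nonzero and μV = V', then μ = cλ for some nonzero c ∈ k. -/

import Mathlib

open Module LinearMap

section aux
variable {k K : Type u} [Field k] [Field K] [Algebra k K] [FiniteDimensional k K]

/-- Two functionals with nested kernels are proportional. -/
lemma aux_dual_smul (φ ψ : Module.Dual k K) (hφ : φ ≠ 0) (h : ker φ ≤ ker ψ) :
    ∃ c : k, ψ = c • φ := by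
  obtain ⟨x, hx⟩ : ∃ x, φ x ≠ 0 := by
    by_contra hc; push_neg at hc; exact hφ (LinearMap.ext hc)
  refine ⟨ψ x / φ x, ?_⟩
  ext y
  have hy : y - (φ y / φ x) • x ∈ ker φ := by
    simp [mem_ker, map_sub, map_smul, div_mul_cancel₀ _ hx]
  have h2 := h hy
  simp only [mem_ker, map_sub, map_smul, sub_eq_zero, smul_eq_mul] at h2
  simp only [LinearMap.smul_apply, smul_eq_mul]
  rw [h2]; field_simp

/-- A codimension-one subspace is the kernel of a nonzero functional. -/
lemma aux_hyperplane (V : Submodule k K) (hV : finrank k V = finrank k K - 1) :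
    ∃ φ : Module.Dual k K, φ ≠ 0 ∧ ker φ = V := by
  have hn : 1 ≤ finrank k K := Module.finrank_pos
  have hq : finrank k V.dualAnnihilator = finrank k (K ⧸ V) :=
    (Subspace.quotEquivAnnihilator V).finrank_eq.symm
  have hq2 := Submodule.finrank_quotient_add_finrank V
  have hann1 : finrank k V.dualAnnihilator = 1 := by omega
  have : Nontrivial V.dualAnnihilator := by
    apply Module.nontrivial_of_finrank_pos (R := k); omega
  obtain ⟨⟨φ, hφmem⟩, hφ0⟩ := exists_ne (0 : V.dualAnnihilator)
  have hφne : φ ≠ 0 := by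
    simpa [Subtype.ext_iff] using hφ0
  have hle : V ≤ ker φ := fun x hx => (Submodule.mem_dualAnnihilator φ).mp hφmem x hx
  have hkerrank : finrank k (ker φ) = finrank k K - 1 := by
    have := finrank_range_add_finrank_ker φ
    have hr : finrank k (range φ) = 1 := by
      have : range φ = ⊤ := by
        exact LinearMap.range_eq_top.mpr (LinearMap.surjective_of_ne_zero hφne)
      rw [this, finrank_top, finrank_self]
    omega
  exact ⟨φ, hφne, (Submodule.eq_of_le_of_finrank_eq hle (by omega)).symm⟩

/-- Multiplying a trace-kernel hyperplane. -/
lemma aux_map_ker (a μ : K) (hμ : μ ≠ 0) :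
    Submodule.map (LinearMap.mulLeft k μ) (ker (Algebra.traceForm k K a)) =
      ker (Algebra.traceForm k K (a * μ⁻¹)) := by
  ext y
  simp only [Submodule.mem_map, mem_ker, Algebra.traceForm_apply, mulLeft_apply]
  constructor
  · rintro ⟨x, hx, rfl⟩
    rw [show a * μ⁻¹ * (μ * x) = a * x by field_simp]
    exact hx
  · intro hy
    refine ⟨μ⁻¹ * y, ?_, by field_simp⟩
    rw [show a * (μ⁻¹ * y) = a * μ⁻¹ * y by ring]
    exact hy

end aux

/-- For a finite separable field extension `K/k` and two `k`-subspaces `V, V' ⊆ K` of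
codimension 1, there exists `λ ∈ K`, nonzero and unique up to a nonzero scalar in `k`,
such that `λV = V'`. -/
theorem exists_unique_scaling_of_codim_one_subspaces {k K : Type u}
    [Field k] [Field K] [Algebra k K] [FiniteDimensional k K] [Algebra.IsSeparable k K]
    (V V' : Submodule k K)
    (hV : Module.finrank k V = Module.finrank k K - 1)
    (hV' : Module.finrank k V' = Module.finrank k K - 1) :
    ∃ lam : K, lam ≠ 0 ∧ Submodule.map (LinearMap.mulLeft k lam) V = V' ∧
      ∀ mu : K, mu ≠ 0 → Submodule.map (LinearMap.mulLeft k mu) V = V' →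
        ∃ c : k, c ≠ 0 ∧ mu = algebraMap k K c * lam := by
  set B := Algebra.traceForm k K with hBdef
  have hB := traceForm_nondegenerate k K
  set e := B.toDual hB with hedef
  obtain ⟨φ, hφ0, hφ⟩ := aux_hyperplane V hV
  obtain ⟨ψ, hψ0, hψ⟩ := aux_hyperplane V' hV'
  set a := e.symm φ with hadef
  set b := e.symm ψ with hbdef
  have hea : B a = φ := e.apply_symm_apply φ
  have heb : B b = ψ := e.apply_symm_apply ψ
  have ha0 : a ≠ 0 := by
    intro h; apply hφ0; rw [← hea, h, map_zero]
  have hb0 : b ≠ 0 := by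
    intro h; apply hψ0; rw [← heb, h, map_zero]
  have hVeq : V = ker (B a) := by rw [hea, hφ]
  have hV'eq : V' = ker (B b) := by rw [heb, hψ]
  have hBinj : Function.Injective B := e.injective
  refine ⟨a / b, div_ne_zero ha0 hb0, ?_, ?_⟩
  · rw [hVeq, aux_map_ker a (a / b) (div_ne_zero ha0 hb0), hV'eq]
    congr 1
    field_simp
    rfl
  · intro mu hmu hmap
    rw [hVeq, aux_map_ker a mu hmu, hV'eq] at hmap
    -- ker (B (a * mu⁻¹)) = ker (B b)
    obtain ⟨c, hc⟩ := aux_dual_smul (B b) (B (a * mu⁻¹)) (by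
      intro h; apply hb0; exact hBinj (by rw [h, map_zero])) (le_of_eq hmap.symm)
    have hc' : a * mu⁻¹ = c • b := by
      apply hBinj; rw [hc, map_smul]
    have hcne : c ≠ 0 := by
      intro h; rw [h, zero_smul] at hc'
      exact (mul_ne_zero ha0 (inv_ne_zero hmu)) hc'
    refine ⟨c⁻¹, inv_ne_zero hcne, ?_⟩
    rw [Algebra.smul_def] at hc'
    have hcK : algebraMap k K c ≠ 0 := by
      simpa using (algebraMap k K).injective.ne hcne
    rw [map_inv₀]
    field_simp at hc' ⊢
    linear_combination -hc'
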